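/- Subcapture strengthening: let Γ = Γ₁ ++ Δ ++ Γ₂ be a context and Γ' = Γ₁ ++ Γ₂, where Γ' is well-formed in the sense that no capture set declared in Γ' mentions a variable bound in Δ. If Γ ⊢ C₁ <: C₂, then Γ' ⊢ (C₁ \ dom(Δ)) <: (C₂ \ dom(Δ)). -/

import Mathlib

/-- A typing context: a list of bindings `x : C` with distinct variables. -/
abbrev Ctx := List (ℕ × Finset ℕ)

/-- The domain of a context: the finite set of variables it binds. -/
def Ctx.dom (Γ : Ctx) : Finset ℕ := (Γ.map Prod.fst).toFinset

/-- The subcapturing relation over list contexts; `sc_var` uses membership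
of a binding `x : C` in the context. Note that `sc_set` in particular derives
`Γ ⊢ ∅ <: C` for any `C`. -/
inductive Subcapt (Γ : Ctx) : Finset ℕ → Finset ℕ → Prop where
  | sc_trans {C₁ C C₂ : Finset ℕ} :
      Subcapt Γ C₁ C → Subcapt Γ C C₂ → Subcapt Γ C₁ C₂
  | sc_elem {x : ℕ} {C : Finset ℕ} :
      x ∈ C → Subcapt Γ {x} C
  | sc_set {C₁ C₂ : Finset ℕ} :
      (∀ x ∈ C₁, Subcapt Γ {x} C₂) → Subcapt Γ C₁ C₂
  | sc_var {x : ℕ} {C : Finset ℕ} :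
      (x, C) ∈ Γ → Subcapt Γ {x} C

theorem subcapt_strengthening (Γ₁ Δ Γ₂ : Ctx) {C₁ C₂ : Finset ℕ}
    (hdistinct : (((Γ₁ ++ Δ ++ Γ₂).map Prod.fst)).Nodup)
    (hwf : ∀ p ∈ Γ₁ ++ Γ₂, ∀ y ∈ p.2, y ∉ Ctx.dom Δ)
    (h : Subcapt (Γ₁ ++ Δ ++ Γ₂) C₁ C₂) :
    Subcapt (Γ₁ ++ Γ₂) (C₁ \ Ctx.dom Δ) (C₂ \ Ctx.dom Δ) := by
  induction h with
  | sc_trans _ _ ih1 ih2 => exact Subcapt.sc_trans ih1 ih2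
  | @sc_elem x C hx =>
    apply Subcapt.sc_set
    intro y hy
    simp only [Finset.mem_sdiff, Finset.mem_singleton] at hy
    obtain ⟨rfl, hnd⟩ := hy
    exact Subcapt.sc_elem (by simp [Finset.mem_sdiff, hx, hnd])
  | @sc_set C₁ C₂ _ ih =>
    apply Subcapt.sc_set
    intro y hy
    simp only [Finset.mem_sdiff] at hy
    have := ih y hy.1
    rwa [Finset.sdiff_eq_self_of_disjoint (by simp [Finset.disjoint_singleton_left, hy.2])] at this
  | @sc_var x C hmem =>
    rcases List.mem_append.mp hmem with hm | hΓ₂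
    · rcases List.mem_append.mp hm with hΓ₁ | hΔ
      · -- x bound in Γ₁
        have hx : x ∉ Ctx.dom Δ := by
          have := hdistinct
          simp only [List.map_append, List.nodup_append] at this
          intro hxΔ
          have hxΔ' : x ∈ Δ.map Prod.fst := by
            simpa [Ctx.dom, List.mem_toFinset] using hxΔ
          exact this.1.2.2 _ (List.mem_map_of_mem (f := Prod.fst) hΓ₁) _ hxΔ' rfl
        have hC : C \ Ctx.dom Δ = C :=
          Finset.sdiff_eq_self_of_disjoint (Finset.disjoint_left.mpr
            (fun y hy => hwf (x, C) (List.mem_append.mpr (Or.inl hΓ₁)) y hy))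
        rw [Finset.sdiff_eq_self_of_disjoint (by simp [Finset.disjoint_singleton_left, hx]), hC]
        exact Subcapt.sc_var (List.mem_append.mpr (Or.inl hΓ₁))
      · -- x bound in Δ
        have hx : x ∈ Ctx.dom Δ := by
          simp only [Ctx.dom, List.mem_toFinset]
          exact List.mem_map_of_mem (f := Prod.fst) hΔ
        apply Subcapt.sc_set
        intro y hy
        simp only [Finset.mem_sdiff, Finset.mem_singleton] at hy
        exact absurd hx (hy.1 ▸ hy.2)
    · -- x bound in Γ₂
      have hx : x ∉ Ctx.dom Δ := by
        have := hdistinct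
        simp only [List.map_append, List.nodup_append] at this
        intro hxΔ
        have hxΔ' : x ∈ Δ.map Prod.fst := by
          simpa [Ctx.dom, List.mem_toFinset] using hxΔ
        exact this.2.2 _ (List.mem_append.mpr (Or.inr hxΔ'))
          _ (List.mem_map_of_mem (f := Prod.fst) hΓ₂) rfl
      have hC : C \ Ctx.dom Δ = C :=
        Finset.sdiff_eq_self_of_disjoint (Finset.disjoint_left.mpr
          (fun y hy => hwf (x, C) (List.mem_append.mpr (Or.inr hΓ₂)) y hy))
      rw [Finset.sdiff_eq_self_of_disjoint (by simp [Finset.disjoint_singleton_left, hx]), hC]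
      exact Subcapt.sc_var (List.mem_append.mpr (Or.inr hΓ₂))
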